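/- For fixed α ∈ (0,1), T > 0, K ≥ 1, the function γ ↦ τ(γ) = (α γ γ' ρ d^4 T) / (ρ d^2 (γ' K + α γ T) + 1), where γ' = (1 - αγ)/(1 - α), attains its maximum over γ ∈ [0, 1/α] at γ* = 1/(α(1 + √(1 - μ₁))) where μ₁ = ρ d^2 (K - (1-α)T) / (1 - α + ρ d^2 K), provided K ≤ αT (so that μ₁ ≤ 1). -/

import Mathlib

/-- Effective SNR factor `τ(γ)` in the case `K ≤ αT`, with `γ' = (1-αγ)/(1-α)`. -/
noncomputable def tauLow (α T K ρ d γ : ℝ) : ℝ :=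
  (α * γ * ((1 - α * γ) / (1 - α)) * ρ * d ^ 4 * T) /
    (ρ * d ^ 2 * (((1 - α * γ) / (1 - α)) * K + α * γ * T) + 1)

/-- Optimal training power coefficient for `K ≤ αT`. -/
noncomputable def gammaStarLow (α T K ρ d : ℝ) : ℝ :=
  1 / (α * (1 + Real.sqrt (1 - ρ * d ^ 2 * (K - (1 - α) * T) / (1 - α + ρ * d ^ 2 * K))))

/-- For `K ≤ αT`, `τ(γ)` attains its maximum over `γ ∈ [0, 1/α]` at
`γ* = 1/(α(1 + √(1 - μ₁)))` with `μ₁ = ρd²(K - (1-α)T)/(1-α+ρd²K)`. -/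
theorem tauLow_isMaxOn_gammaStar (α T K ρ d : ℝ) (hα : α ∈ Set.Ioo (0 : ℝ) 1)
    (hT : 0 < T) (hK : 1 ≤ K) (hρ : 0 < ρ) (hd : 0 < d) (hKT : K ≤ α * T) :
    gammaStarLow α T K ρ d ∈ Set.Icc 0 (1 / α) ∧
    ∀ γ ∈ Set.Icc (0 : ℝ) (1 / α),
      tauLow α T K ρ d γ ≤ tauLow α T K ρ d (gammaStarLow α T K ρ d) := by
  obtain ⟨hα0, hα1⟩ := hα
  have h1α : 0 < 1 - α := by linarith
  set A : ℝ := 1 - α + ρ * d ^ 2 * K with hAdef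
  have hA : 0 < A := by positivity
  set μ : ℝ := ρ * d ^ 2 * (K - (1 - α) * T) / A with hμdef
  have h1μ : 1 - μ = (1 - α) * (1 + ρ * d ^ 2 * T) / A := by
    have hμA : μ * A = ρ * d ^ 2 * (K - (1 - α) * T) := by rw [hμdef]; exact div_mul_cancel₀ _ hA.ne'
    field_simp [hμdef]; linear_combination (-1 : ℝ) * hμA + hAdef
  have h1μpos : 0 < 1 - μ := by rw [h1μ]; positivity
  set s : ℝ := Real.sqrt (1 - μ) with hsdef
  have hs : 0 < s := Real.sqrt_pos.mpr h1μpos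
  have hs2 : s ^ 2 = 1 - μ := Real.sq_sqrt h1μpos.le
  have hAs2 : (1 - α) * (1 + ρ * d ^ 2 * T) = A * s ^ 2 := by
    rw [hs2, h1μ]; field_simp
  have h1s : 0 < 1 + s := by linarith
  set g : ℝ := gammaStarLow α T K ρ d with hgdef
  have hgval : g = 1 / (α * (1 + s)) := rfl
  have hag : α * g = 1 / (1 + s) := by
    rw [hgval]; field_simp
  have hmem : g ∈ Set.Icc 0 (1 / α) := by
    constructor
    · rw [hgval]; positivity
    · rw [hgval, div_le_div_iff₀ (by positivity) hα0]
      nlinarith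
  refine ⟨hmem, ?_⟩
  intro γ hγ
  obtain ⟨hγ0, hγ1⟩ := hγ
  have hx0 : 0 ≤ α * γ := by positivity
  have hx1 : α * γ ≤ 1 := by
    calc α * γ ≤ α * (1 / α) := by nlinarith
    _ = 1 := by field_simp
  -- rewrite tauLow into a form with cleared inner division
  have e : ∀ c : ℝ, tauLow α T K ρ d c =
      (α * c * (1 - α * c) * ρ * d ^ 4 * T) /
        (ρ * d ^ 2 * ((1 - α * c) * K + α * c * (1 - α) * T) + (1 - α)) := by
    intro c
    unfold tauLow
    rw [← mul_div_mul_left (α * c * ((1 - α * c) / (1 - α)) * ρ * d ^ 4 * T)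
      (ρ * d ^ 2 * (((1 - α * c) / (1 - α)) * K + α * c * T) + 1) (ne_of_gt h1α)]
    congr 1
    · field_simp
    · field_simp
  rw [e, e, hag]
  set u : ℝ := 1 / (1 + s) with hudef
  have hu1 : u * (1 + s) = 1 := by rw [hudef]; field_simp
  have hu0 : 0 < u := by rw [hudef]; positivity
  have hult : u < 1 := by rw [hudef, div_lt_one h1s]; linarith
  have hK0 : (0:ℝ) < K := by linarith
  have hdenγ : 0 < ρ * d ^ 2 * ((1 - α * γ) * K + α * γ * (1 - α) * T) + (1 - α) := by
    have h1 : (0:ℝ) ≤ 1 - α * γ := by linarith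
    positivity
  have hdenu : 0 < ρ * d ^ 2 * ((1 - u) * K + u * (1 - α) * T) + (1 - α) := by
    have h1 : (0:ℝ) ≤ 1 - u := by linarith
    positivity
  rw [div_le_div_iff₀ hdenγ hdenu]
  have hdγ : ρ * d ^ 2 * ((1 - α * γ) * K + α * γ * (1 - α) * T) + (1 - α)
      = A * (1 - α * γ + s ^ 2 * (α * γ)) := by
    linear_combination (α * γ) * hAs2 - (1 - α * γ) * hAdef
  have hdu : ρ * d ^ 2 * ((1 - u) * K + u * (1 - α) * T) + (1 - α) = A * s := by
    linear_combination u * hAs2 - (1 - u) * hAdef + A * (s - 1) * hu1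
  rw [hdγ, hdu]
  have hnum : u * (1 - u) * (1 + s) ^ 2 = s := by
    linear_combination (s - u - u * s) * hu1
  have key : (α * γ) * (1 - α * γ) * (1 + s) ^ 2 ≤ 1 - α * γ + s ^ 2 * (α * γ) := by
    nlinarith [sq_nonneg ((1 - α * γ) - s * (α * γ))]
  have hcpos : (0:ℝ) ≤ ρ * d ^ 4 * T * A * (u * (1 - u)) := by
    have h1 : (0:ℝ) ≤ 1 - u := by linarith
    positivity
  calc α * γ * (1 - α * γ) * ρ * d ^ 4 * T * (A * s)
      = ρ * d ^ 4 * T * A * (u * (1 - u)) * ((α * γ) * (1 - α * γ) * (1 + s) ^ 2) := by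
        linear_combination (α * γ * (1 - α * γ) * ρ * d ^ 4 * T * A) * hnum.symm
    _ ≤ ρ * d ^ 4 * T * A * (u * (1 - u)) * (1 - α * γ + s ^ 2 * (α * γ)) :=
        mul_le_mul_of_nonneg_left key hcpos
    _ = u * (1 - u) * ρ * d ^ 4 * T * (A * (1 - α * γ + s ^ 2 * (α * γ))) := by ring
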